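/- The Foulkes characters satisfy the branching rule: the restriction of φ^n_k from W_{r,n} to W_{r,n-1} equals (r(n+1)-(rk+1))·φ^{n-1}_{k-1} + (rk+1)·φ^{n-1}_k. -/

import Mathlib

/-- `ℓ_m(w)`: the number of color-`0` cycles of `w = (σ, x) ∈ W_{r,m}`. -/
def blockLen (r m : ℕ) (σ : Equiv.Perm (Fin m)) (x : Fin m → ZMod r) : ℕ :=
  (σ.cycleFactorsFinset.filter (fun c => (∑ i ∈ c.support, x i) = 0)).card +
    (Finset.univ.filter (fun i : Fin m => σ i = i ∧ x i = 0)).card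


lemma coe_asEmb (n : ℕ) (a : Fin n) :
    (Fin.castSuccEmb.toEquivRange.asEmbedding a : Fin (n+1)) = a.castSucc := by
  rw [Equiv.asEmbedding_apply, Function.Embedding.toEquivRange_apply]
  rfl

lemma extend_apply_castSucc (n : ℕ) (c : Equiv.Perm (Fin n)) (b : Fin n) :
    (c.extendDomain Fin.castSuccEmb.toEquivRange) b.castSucc = (c b).castSucc :=
  Equiv.Perm.extendDomain_apply_image c Fin.castSuccEmb.toEquivRange b

lemma extend_mem_cycleFactors {n : ℕ} {σ c : Equiv.Perm (Fin n)}
    (hc : c ∈ σ.cycleFactorsFinset) :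
    c.extendDomain Fin.castSuccEmb.toEquivRange
      ∈ (σ.extendDomain Fin.castSuccEmb.toEquivRange).cycleFactorsFinset := by
  have hc' := Equiv.Perm.mem_cycleFactorsFinset_iff.mp hc
  rw [Equiv.Perm.mem_cycleFactorsFinset_iff]
  refine ⟨hc'.1.extendDomain _, ?_⟩
  intro a ha
  rw [Equiv.Perm.support_extend_domain, Finset.mem_map] at ha
  obtain ⟨b, hb, rfl⟩ := ha
  rw [coe_asEmb, extend_apply_castSucc, hc'.2 b hb, extend_apply_castSucc]

lemma viaFintype_eq_extend {n : ℕ} (σ : Equiv.Perm (Fin n)) :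
    σ.viaFintypeEmbedding Fin.castSuccEmb = σ.extendDomain Fin.castSuccEmb.toEquivRange := rfl

lemma blockLen_snoc (r n : ℕ) (σ : Equiv.Perm (Fin n)) (x : Fin n → ZMod r) :
    blockLen r (n+1) (σ.viaFintypeEmbedding Fin.castSuccEmb) (Fin.snoc x (0 : ZMod r)) =
      blockLen r n σ x + 1 := by
  rw [viaFintype_eq_extend]
  set e := (Fin.castSuccEmb (n := n)).toEquivRange with he
  set σ' := σ.extendDomain e with hσ'
  have hcast : ∀ j : Fin n, σ' j.castSucc = (σ j).castSucc := extend_apply_castSucc n σ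
  have hlast : σ' (Fin.last n) = Fin.last n := by
    apply Equiv.Perm.extendDomain_apply_not_subtype
    rintro ⟨j, hj⟩
    exact (Fin.castSucc_lt_last j).ne (by simpa using hj)
  have hcyc : ((σ'.cycleFactorsFinset.filter
        (fun c => (∑ i ∈ c.support, Fin.snoc x (0 : ZMod r) i) = 0))).card
      = (σ.cycleFactorsFinset.filter (fun c => (∑ i ∈ c.support, x i) = 0)).card := by
    symm
    apply Finset.card_bij (fun c _ => c.extendDomain e)
    · intro c hc
      simp only [Finset.mem_filter] at hc ⊢
      refine ⟨extend_mem_cycleFactors hc.1, ?_⟩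
      rw [Equiv.Perm.support_extend_domain, Finset.sum_map, ← hc.2]
      exact Finset.sum_congr rfl fun i _ => by rw [coe_asEmb, Fin.snoc_castSucc]
    · intro c1 h1 c2 h2 heq
      exact Equiv.Perm.extendDomainHom_injective e heq
    · intro d hd
      simp only [Finset.mem_filter] at hd
      obtain ⟨hd1, hd2⟩ := hd
      obtain ⟨b, hb⟩ := (Equiv.Perm.mem_cycleFactorsFinset_iff.mp hd1).1.nonempty_support
      have hbσ' : b ∈ σ'.support := Equiv.Perm.mem_cycleFactorsFinset_support_le hd1 hb
      rw [Equiv.Perm.support_extend_domain, Finset.mem_map] at hbσ'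
      obtain ⟨a, ha, rfl⟩ := hbσ'
      have hamem : a ∈ (σ.cycleOf a).support := by
        rw [Equiv.Perm.mem_support_cycleOf_iff]
        exact ⟨Equiv.Perm.SameCycle.refl _ _, ha⟩
      have hcycmem : σ.cycleOf a ∈ σ.cycleFactorsFinset :=
        Equiv.Perm.cycleOf_mem_cycleFactorsFinset_iff.mpr (by simpa using ha)
      have hext := extend_mem_cycleFactors (σ := σ) hcycmem
      have hamem' : (e.asEmbedding a) ∈ ((σ.cycleOf a).extendDomain e).support := by
        rw [Equiv.Perm.support_extend_domain, Finset.mem_map]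
        exact ⟨a, hamem, rfl⟩
      have heq : (σ.cycleOf a).extendDomain e = d := by
        rw [Equiv.Perm.cycle_is_cycleOf hamem' hext, ← Equiv.Perm.cycle_is_cycleOf hb hd1]
      refine ⟨σ.cycleOf a, ?_, heq⟩
      simp only [Finset.mem_filter]
      refine ⟨hcycmem, ?_⟩
      rw [← heq, Equiv.Perm.support_extend_domain, Finset.sum_map] at hd2
      rw [← hd2]
      exact Finset.sum_congr rfl fun i _ => by rw [coe_asEmb, Fin.snoc_castSucc]
  have hfix : (Finset.univ.filter
        (fun i : Fin (n+1) => σ' i = i ∧ (Fin.snoc x (0 : ZMod r) : Fin (n+1) → ZMod r) i = 0)).card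
      = (Finset.univ.filter (fun i : Fin n => σ i = i ∧ x i = 0)).card + 1 := by
    have hset : (Finset.univ.filter
          (fun i : Fin (n+1) => σ' i = i ∧ (Fin.snoc x (0 : ZMod r) : Fin (n+1) → ZMod r) i = 0))
        = insert (Fin.last n)
            ((Finset.univ.filter (fun i : Fin n => σ i = i ∧ x i = 0)).map Fin.castSuccEmb) := by
      ext i
      refine Fin.lastCases ?_ ?_ i
      · simp [hlast, Fin.snoc_last]
      · intro j
        simp only [Finset.mem_filter, Finset.mem_univ, true_and, Finset.mem_insert,
          Finset.mem_map, hcast, Fin.snoc_castSucc]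
        constructor
        · rintro ⟨h1, h2⟩
          exact Or.inr ⟨j, by simp [Fin.castSucc_inj.mp h1, h2], rfl⟩
        · rintro (h | ⟨a, ha, haj⟩)
          · exact absurd h (Fin.castSucc_lt_last j).ne
          · obtain rfl : a = j := Fin.castSucc_injective _ haj
            exact ⟨by rw [ha.1], ha.2⟩
    rw [hset, Finset.card_insert_of_notMem, Finset.card_map]
    intro h
    obtain ⟨a, _, ha⟩ := Finset.mem_map.mp h
    exact (Fin.castSucc_lt_last a).ne (ha : a.castSucc = Fin.last n)
  rw [blockLen, blockLen, hcyc, hfix, Nat.add_assoc]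

lemma key_sum (r n k L : ℕ) (hk : k ≤ n + 1) :
    ∑ j ∈ Finset.range (k+1),
        (-1:ℂ)^j * ((n + 1 + 1).choose j : ℂ) * ((r:ℂ)*((k-j:ℕ):ℂ)+1)^(L+1)
    = ((r:ℂ)*(n+2) - ((r:ℂ)*k+1)) *
        (if k = 0 then 0 else ∑ j ∈ Finset.range (k - 1 + 1),
          (-1:ℂ)^j * ((n+1).choose j : ℂ) * ((r:ℂ)*((k-1-j:ℕ):ℂ)+1)^L)
      + ((r:ℂ)*k+1) * ∑ j ∈ Finset.range (k+1),
          (-1:ℂ)^j * ((n+1).choose j : ℂ) * ((r:ℂ)*((k-j:ℕ):ℂ)+1)^L := by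
  rcases k with _ | k'
  · simp
  rw [if_neg (Nat.succ_ne_zero k'), Nat.succ_sub_one]
  rw [Finset.sum_range_succ' _ (k'+1), Finset.sum_range_succ' (fun j =>
      (-1:ℂ)^j * ((n+1).choose j : ℂ) * ((r:ℂ)*((k'+1-j:ℕ):ℂ)+1)^L) (k'+1)]
  simp only [Nat.succ_sub_succ, Nat.sub_zero, pow_zero, one_mul,
    Nat.choose_zero_right, Nat.cast_one]
  have hS : ∑ j ∈ Finset.range (k'+1),
      (-1:ℂ)^(j+1) * ((n + 1 + 1).choose (j+1) : ℂ) * ((r:ℂ)*((k'-j:ℕ):ℂ)+1)^(L+1)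
      = ∑ j ∈ Finset.range (k'+1),
        (((r:ℂ)*(n+2) - ((r:ℂ)*((k'+1:ℕ):ℂ)+1)) *
            ((-1:ℂ)^j * ((n+1).choose j : ℂ) * ((r:ℂ)*((k'-j:ℕ):ℂ)+1)^L)
          + ((r:ℂ)*((k'+1:ℕ):ℂ)+1) *
            ((-1:ℂ)^(j+1) * ((n+1).choose (j+1) : ℂ) * ((r:ℂ)*((k'-j:ℕ):ℂ)+1)^L)) := by
    refine Finset.sum_congr rfl fun j hj => ?_
    have hj' : j ≤ k' := Nat.lt_succ_iff.mp (Finset.mem_range.mp hj)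
    have hcast : ((k'-j : ℕ) : ℂ) = (k':ℂ) - j := by
      push_cast [Nat.cast_sub hj']; ring
    have hc1 : ((n + 1 + 1).choose (j+1) : ℂ)
        = ((n+1).choose j : ℂ) + ((n+1).choose (j+1) : ℂ) := by
      exact_mod_cast congrArg (Nat.cast : ℕ → ℂ) (Nat.choose_succ_succ (n+1) j)
    have hc2 : ((j:ℂ)+1) * ((n + 1 + 1).choose (j+1) : ℂ)
        = ((n:ℂ)+2) * ((n+1).choose j : ℂ) := by
      have h := Nat.add_one_mul_choose_eq (n+1) j
      have h' := congrArg (Nat.cast : ℕ → ℂ) h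
      push_cast at h'
      linear_combination -h'
    rw [hcast]
    push_cast
    linear_combination ((-1:ℂ)^j * ((r:ℂ)*((k':ℂ)-(j:ℂ))+1)^L * r) * hc2
      - ((-1:ℂ)^j * ((r:ℂ)*((k':ℂ)-(j:ℂ))+1)^L * ((r:ℂ)*((k':ℂ)+1)+1)) * hc1
  rw [hS, Finset.sum_add_distrib, ← Finset.mul_sum, ← Finset.mul_sum]
  push_cast
  ring

/-- The Foulkes character `φ^m_k = ∑_{j=0}^{k} (-1)^j C(m+1,j) χ^m_{k-j}`
of `W_{r,m}`, where `χ^m_i(w) = (ri+1)^{ℓ_m(w)}`. -/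
noncomputable def foulkesChar (r m k : ℕ)
    (w : Equiv.Perm (Fin m) × (Fin m → ZMod r)) : ℂ :=
  ∑ j ∈ Finset.range (k + 1),
    (-1 : ℂ) ^ j * ((m + 1).choose j : ℂ) *
      ((r : ℂ) * (k - j : ℕ) + 1) ^ blockLen r m w.1 w.2

/-- The branching rule for Foulkes characters: restricting `φ^{n+1}_k` from
`W_{r,n+1}` to `W_{r,n}` (embedded by fixing the last letter with color `0`)
gives `(r(n+2) - (rk+1))·φ^n_{k-1} + (rk+1)·φ^n_k`. -/
theorem foulkesChar_branching (r n k : ℕ) (hr : 1 ≤ r) (hk : k ≤ n + 1)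
    (σ : Equiv.Perm (Fin n)) (x : Fin n → ZMod r) :
    foulkesChar r (n + 1) k
        (σ.viaFintypeEmbedding Fin.castSuccEmb, Fin.snoc x (0 : ZMod r)) =
      ((r : ℂ) * (n + 2) - ((r : ℂ) * k + 1)) *
          (if k = 0 then 0 else foulkesChar r n (k - 1) (σ, x)) +
        ((r : ℂ) * k + 1) * foulkesChar r n k (σ, x) := by
  unfold foulkesChar
  simp only [blockLen_snoc]
  have h := key_sum r n k (blockLen r n σ x) hk
  rcases eq_or_ne k 0 with rfl | hk0
  · simpa using h
  · rw [if_neg hk0] at h ⊢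
    exact h
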